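/- Fix η ∈ (0,1]. As ℰ → 0+, I_Z(ℰ, η)/(ηℰ) = log(1/(ηℰ)) + 1 - H₂(η)/η + o(1); that is, lim_{ℰ→0+} [I_Z(ℰ,η)/(ηℰ) - log(1/(ηℰ))] = 1 - H₂(η)/η, with the convention H₂(1) = 0. -/

import Mathlib

open Real Filter

noncomputable def H2 (x : ℝ) : ℝ := x * Real.log (1 / x) + (1 - x) * Real.log (1 / (1 - x))

noncomputable def IZ (q μ : ℝ) : ℝ := H2 (q * μ) - q * H2 μ

lemma log_one_sub_div : Tendsto (fun t : ℝ => Real.log (1 - t) / t)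
    (nhdsWithin 0 {(0:ℝ)}ᶜ) (nhds (-1)) := by
  have h : HasDerivAt (fun t : ℝ => Real.log (1 - t)) (-1) 0 := by
    have h1 : HasDerivAt (fun t : ℝ => 1 - t) (-1) 0 := by
      simpa using (hasDerivAt_id (0:ℝ)).const_sub 1
    have := (Real.hasDerivAt_log (by norm_num : (1:ℝ) - 0 ≠ 0)).comp 0 h1
    exact this.congr_deriv (by norm_num)
  have := hasDerivAt_iff_tendsto_slope.mp h
  refine this.congr (fun t => ?_)
  simp [slope_def_field, div_eq_mul_inv, mul_comm]

theorem IZ_photon_efficiency (η : ℝ) (hη : η ∈ Set.Ioc (0 : ℝ) 1) :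
    Tendsto (fun E : ℝ => IZ E η / (η * E) - Real.log (1 / (η * E)))
      (nhdsWithin 0 (Set.Ioi 0)) (nhds (1 - H2 η / η)) := by
  obtain ⟨hη0, hη1⟩ := hη
  have hmul : Tendsto (fun E : ℝ => η * E) (nhdsWithin 0 (Set.Ioi 0))
      (nhdsWithin 0 {(0:ℝ)}ᶜ) := by
    rw [tendsto_nhdsWithin_iff]
    constructor
    · have : Tendsto (fun E : ℝ => η * E) (nhds 0) (nhds (η * 0)) :=
        (continuous_const.mul continuous_id).tendsto 0
      simpa using this.mono_left nhdsWithin_le_nhds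
    · filter_upwards [self_mem_nhdsWithin] with E hE
      exact (mul_pos hη0 hE).ne'
  have h1 : Tendsto (fun E : ℝ => (1 - η * E) * (-(Real.log (1 - η * E) / (η * E))) - H2 η / η)
      (nhdsWithin 0 (Set.Ioi 0)) (nhds (1 - H2 η / η)) := by
    have hA : Tendsto (fun E : ℝ => 1 - η * E) (nhdsWithin 0 (Set.Ioi 0)) (nhds 1) := by
      have : Tendsto (fun E : ℝ => 1 - η * E) (nhds 0) (nhds (1 - η * 0)) :=
        (continuous_const.sub (continuous_const.mul continuous_id)).tendsto 0
      simpa using this.mono_left nhdsWithin_le_nhds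
    have hB : Tendsto (fun E : ℝ => -(Real.log (1 - η * E) / (η * E)))
        (nhdsWithin 0 (Set.Ioi 0)) (nhds 1) := by
      have := (log_one_sub_div.comp hmul).neg
      simpa using this
    have := (hA.mul hB).sub_const (H2 η / η)
    simpa using this
  refine h1.congr' ?_
  filter_upwards [self_mem_nhdsWithin] with E hE
  have hE0 : (0:ℝ) < E := hE
  have hx : η * E ≠ 0 := (mul_pos hη0 hE0).ne'
  have hEη : E * η ≠ 0 := by rw [mul_comm]; exact hx
  simp only [IZ, H2, one_div, Real.log_inv]
  field_simp
  ring_nf
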